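/- Let F : X ⇉ Y be a set-valued mapping and Θ ⊂ Y with one of F, Θ polyhedral convex and the other generalized polyhedral convex. Then for any x̄ ∈ F⁻¹(Θ) and any ȳ ∈ F(x̄) ∩ Θ, N(x̄; F⁻¹(Θ)) = D*F(x̄, ȳ)(N(ȳ; Θ)), where F⁻¹(Θ) = {x : F(x) ∩ Θ ≠ ∅}. -/

import Mathlib

open Set Pointwise

def IsPolyhedral {X : Type*} [AddCommGroup X] [Module ℝ X] [TopologicalSpace X]
    (P : Set X) : Prop :=
  ∃ (m : ℕ) (f : Fin m → X →L[ℝ] ℝ) (α : Fin m → ℝ),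
    P = {x : X | ∀ i, f i x ≤ α i}

def IsGPolyhedral {X : Type*} [AddCommGroup X] [Module ℝ X] [TopologicalSpace X]
    (Q : Set X) : Prop :=
  ∃ (P : Set X) (a : X) (L : Submodule ℝ X),
    IsPolyhedral P ∧ IsClosed (L : Set X) ∧ Q = P ∩ (a +ᵥ (L : Set X))

def normalCone {X : Type*} [AddCommGroup X] [Module ℝ X] [TopologicalSpace X]
    (Ω : Set X) (xb : X) : Set (X →L[ℝ] ℝ) :=
  {f | ∀ x ∈ Ω, f (x - xb) ≤ 0}

def gph {X Y : Type*} (F : X → Set Y) : Set (X × Y) := {p | p.2 ∈ F p.1}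

def coderiv {X Y : Type*} [AddCommGroup X] [Module ℝ X] [TopologicalSpace X]
    [AddCommGroup Y] [Module ℝ Y] [TopologicalSpace Y]
    (F : X → Set Y) (xb : X) (yb : Y) (v : Y →L[ℝ] ℝ) : Set (X →L[ℝ] ℝ) :=
  {u | ∀ x : X, ∀ y ∈ F x, u (x - xb) - v (y - yb) ≤ 0}

def epi {X : Type*} (f : X → EReal) : Set (X × ℝ) := {p | f p.1 ≤ (p.2 : EReal)}

def subdiff {X : Type*} [AddCommGroup X] [Module ℝ X] [TopologicalSpace X]
    (f : X → EReal) (xb : X) : Set (X →L[ℝ] ℝ) :=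
  {g | ∀ x : X, ((g (x - xb) : ℝ) : EReal) + f xb ≤ f x}

def singSubdiff {X : Type*} [AddCommGroup X] [Module ℝ X] [TopologicalSpace X]
    (f : X → EReal) (xb : X) : Set (X →L[ℝ] ℝ) :=
  {g | ∀ x : X, ∀ α : ℝ, f x ≤ (α : EReal) → g (x - xb) ≤ 0}

variable {X : Type*} [AddCommGroup X] [Module ℝ X] [TopologicalSpace X]
  [IsTopologicalAddGroup X] [ContinuousSMul ℝ X] [LocallyConvexSpace ℝ X] [T2Space X]
variable {Y : Type*} [AddCommGroup Y] [Module ℝ Y] [TopologicalSpace Y]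
  [IsTopologicalAddGroup Y] [ContinuousSMul ℝ Y] [LocallyConvexSpace ℝ Y] [T2Space Y]
variable {Z : Type*} [AddCommGroup Z] [Module ℝ Z] [TopologicalSpace Z]
  [IsTopologicalAddGroup Z] [ContinuousSMul ℝ Z] [LocallyConvexSpace ℝ Z] [T2Space Z]

universe u

lemma farkas : ∀ (m : ℕ) {V : Type u} [AddCommGroup V] [Module ℝ V]
    (f : Fin m → (V →ₗ[ℝ] ℝ)) (u : V →ₗ[ℝ] ℝ),
    (∀ d, (∀ i, f i d ≤ 0) → u d ≤ 0) →
    ∃ lam : Fin m → ℝ, (∀ i, 0 ≤ lam i) ∧ u = ∑ i, lam i • f i := by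
  intro m
  induction m with
  | zero =>
    intro V _ _ f u hu
    refine ⟨fun _ => 0, fun i => le_rfl, ?_⟩
    have h0 : ∀ d, u d = 0 := by
      intro d
      have h1 := hu d (fun i => i.elim0)
      have h2 := hu (-d) (fun i => i.elim0)
      rw [map_neg] at h2; linarith
    ext d; simp [h0 d]
  | succ m ih =>
    intro V _ _ f u hu
    set H := LinearMap.ker (f (Fin.last m)) with hHdef
    have hH : ∀ d : H, (∀ i : Fin m, (f i.castSucc).comp H.subtype d ≤ 0) →
        u.comp H.subtype d ≤ 0 := by
      intro d hd
      apply hu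
      intro i
      refine Fin.lastCases ?_ (fun j => hd j) i
      have hd2 : (d : V) ∈ H := d.2
      exact le_of_eq hd2
    obtain ⟨μ, hμ0, hμ⟩ := ih (fun i => (f i.castSucc).comp H.subtype)
      (u.comp H.subtype) hH
    set w : V →ₗ[ℝ] ℝ := u - ∑ i, μ i • f i.castSucc with hwdef
    have hw : ∀ d ∈ H, w d = 0 := by
      intro d hd
      have := congrFun (congrArg (fun (g : (H : Submodule ℝ V) →ₗ[ℝ] ℝ) => (g : H → ℝ)) hμ) ⟨d, hd⟩
      simp only [LinearMap.comp_apply, Submodule.subtype_apply, LinearMap.sum_apply,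
        LinearMap.smul_apply, smul_eq_mul] at this ⊢
      simp [hwdef, this]
    by_cases hfl : f (Fin.last m) = 0
    · refine ⟨Fin.snoc μ 0, ?_, ?_⟩
      · intro i
        refine Fin.lastCases ?_ (fun j => ?_) i
        · simp
        · simpa using hμ0 j
      · have hwz : ∀ d, w d = 0 := fun d => hw d (by simp [hHdef, hfl])
        have : w = 0 := by ext d; simp [hwz d]
        rw [hwdef, sub_eq_zero] at this
        rw [this, Fin.sum_univ_castSucc]
        simp
    · obtain ⟨d0, hd0⟩ : ∃ d0, f (Fin.last m) d0 ≠ 0 := by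
        by_contra h
        push_neg at h
        exact hfl (by ext d; simp [h d])
      set e := (f (Fin.last m) d0)⁻¹ • d0 with hedef
      have hfe : f (Fin.last m) e = 1 := by
        simp [hedef, inv_mul_cancel₀ hd0]
      set c := w e with hcdef
      have hwc : ∀ d, w d = c * f (Fin.last m) d := by
        intro d
        have hmem : d - (f (Fin.last m) d) • e ∈ H := by
          simp [hHdef, LinearMap.mem_ker, hfe]
        have := hw _ hmem
        simp only [map_sub, map_smul, smul_eq_mul] at this
        linarith [this]
      by_cases hc : 0 ≤ c
      · refine ⟨Fin.snoc μ c, ?_, ?_⟩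
        · intro i
          refine Fin.lastCases ?_ (fun j => ?_) i
          · simpa using hc
          · simpa using hμ0 j
        · ext d
          have h1 := hwc d
          simp only [hwdef, LinearMap.sub_apply, LinearMap.sum_apply, LinearMap.smul_apply,
            smul_eq_mul] at h1
          simp only [Fin.sum_univ_castSucc, LinearMap.add_apply, LinearMap.sum_apply,
            LinearMap.smul_apply, smul_eq_mul, Fin.snoc_castSucc, Fin.snoc_last]
          linarith [h1]
      · push_neg at hc
        have hu' : ∀ d, (∀ i : Fin m, f i.castSucc d ≤ 0) → u d ≤ 0 := by
          intro d hd
          by_cases hld : f (Fin.last m) d ≤ 0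
          · refine hu d ?_
            intro i
            refine Fin.lastCases hld (fun j => hd j) i
          · push_neg at hld
            have h1 := hwc d
            simp only [hwdef, LinearMap.sub_apply, LinearMap.sum_apply, LinearMap.smul_apply,
              smul_eq_mul] at h1
            have h2 : c * f (Fin.last m) d < 0 := mul_neg_of_neg_of_pos hc hld
            have h3 : ∑ i, μ i * f i.castSucc d ≤ 0 :=
              Finset.sum_nonpos fun i _ => mul_nonpos_of_nonneg_of_nonpos (hμ0 i) (hd i)
            linarith
        obtain ⟨lam, hlam0, hlam⟩ := ih (fun i => f i.castSucc) u hu'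
        refine ⟨Fin.snoc lam 0, ?_, ?_⟩
        · intro i
          refine Fin.lastCases ?_ (fun j => ?_) i
          · simp
          · simpa using hlam0 j
        · rw [hlam, Fin.sum_univ_castSucc]
          simp

set_option maxHeartbeats 1000000 in
theorem normalCone_preimage
    (F : X → Set Y) (Θ : Set Y)
    (hFΘ : (IsPolyhedral (gph F) ∧ IsGPolyhedral Θ) ∨
           (IsGPolyhedral (gph F) ∧ IsPolyhedral Θ))
    (xb : X) (yb : Y) (hyb : yb ∈ F xb ∩ Θ) :
    normalCone {x : X | (F x ∩ Θ).Nonempty} xb =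
      ⋃ v ∈ normalCone Θ yb, coderiv F xb yb v := by
  obtain ⟨hyF, hyT⟩ := hyb
  ext u
  simp only [mem_iUnion, exists_prop]
  constructor
  · intro hu
    obtain ⟨mF, gF, αF, aF, LF, mT, hT, αT, aT, LT, hgF, hΘ, hcase⟩ :
        ∃ (mF : ℕ) (gF : Fin mF → (X × Y) →L[ℝ] ℝ) (αF : Fin mF → ℝ)
          (aF : X × Y) (LF : Submodule ℝ (X × Y))
          (mT : ℕ) (hT : Fin mT → Y →L[ℝ] ℝ) (αT : Fin mT → ℝ)
          (aT : Y) (LT : Submodule ℝ Y),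
          gph F = {z | ∀ i, gF i z ≤ αF i} ∩ (aF +ᵥ (LF : Set (X × Y))) ∧
          Θ = {y | ∀ j, hT j y ≤ αT j} ∩ (aT +ᵥ (LT : Set Y)) ∧
          (LF = ⊤ ∨ LT = ⊤) := by
      rcases hFΘ with ⟨⟨mF, gF, αF, hgF⟩, PT, aT, LT, ⟨mT, hT, αT, hPT⟩, _, hΘ⟩ |
        ⟨⟨PF, aF, LF, ⟨mF, gF, αF, hPF⟩, _, hgF⟩, mT, hT, αT, hΘ⟩
      · exact ⟨mF, gF, αF, 0, ⊤, mT, hT, αT, aT, LT, by simp [hgF],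
          by rw [hΘ, hPT], Or.inl rfl⟩
      · exact ⟨mF, gF, αF, aF, LF, mT, hT, αT, 0, ⊤, by rw [hgF, hPF],
          by simp [hΘ], Or.inr rfl⟩
    clear hFΘ
    set zb : X × Y := (xb, yb) with hzbdef
    have hzbF : zb ∈ gph F := hyF
    have hzbP : (∀ i, gF i zb ≤ αF i) ∧ zb ∈ aF +ᵥ (LF : Set (X × Y)) := by
      rw [hgF] at hzbF; exact hzbF
    have hybP : (∀ j, hT j yb ≤ αT j) ∧ yb ∈ aT +ᵥ (LT : Set Y) := by
      have h := hyT; rw [hΘ] at h; exact h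
    set gF' : Fin mF → (X × Y) →L[ℝ] ℝ :=
      (fun i => if gF i zb = αF i then gF i else 0) with hgF'def
    set hT' : Fin mT → Y →L[ℝ] ℝ :=
      (fun j => if hT j yb = αT j then hT j else 0) with hhT'def
    set L : Submodule ℝ (X × Y) := LF ⊓ Submodule.prod ⊤ LT with hLdef
    have hfark : ∀ d : ↥L,
        (∀ i, (Fin.addCases (motive := fun _ => ↥L →ₗ[ℝ] ℝ) (fun i => ((gF' i : (X × Y) →L[ℝ] ℝ) :
            (X × Y) →ₗ[ℝ] ℝ).domRestrict L)
          (fun j => (((hT' j : Y →L[ℝ] ℝ) : Y →ₗ[ℝ] ℝ).comp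
            (LinearMap.snd ℝ X Y)).domRestrict L) i) d ≤ 0) →
        (((u : X →L[ℝ] ℝ) : X →ₗ[ℝ] ℝ).comp (LinearMap.fst ℝ X Y)).domRestrict L d ≤ 0 := by
      intro d hd
      have hdF : (d : X × Y) ∈ LF := (Submodule.mem_inf.mp d.2).1
      have hdT : (d : X × Y).2 ∈ LT := ((Submodule.mem_prod).mp (Submodule.mem_inf.mp d.2).2).2
      have hdi : ∀ i : Fin mF, gF' i (d : X × Y) ≤ 0 := by
        intro i
        have h := hd (Fin.castAdd mT i)
        rw [Fin.addCases_left] at h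
        simpa using h
      have hdj : ∀ j : Fin mT, hT' j (d : X × Y).2 ≤ 0 := by
        intro j
        have h := hd (Fin.natAdd mF j)
        rw [Fin.addCases_right] at h
        simpa using h
      have hev : ∀ᶠ t in nhdsWithin (0 : ℝ) (Set.Ioi 0),
          (∀ i, gF i (zb + t • (d : X × Y)) ≤ αF i) ∧
          (∀ j, hT j (yb + t • (d : X × Y).2) ≤ αT j) := by
        apply Filter.Eventually.and
        · rw [Filter.eventually_all]
          intro i
          by_cases hact : gF i zb = αF i
          · have hgd : gF i (d : X × Y) ≤ 0 := by
              have h := hdi i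
              rw [hgF'def] at h
              simpa [if_pos hact] using h
            filter_upwards [self_mem_nhdsWithin] with t ht
            have ht0 : (0 : ℝ) < t := ht
            have : gF i (zb + t • (d : X × Y)) = gF i zb + t * gF i (d : X × Y) := by
              simp [map_add, map_smul]
            rw [this]
            nlinarith [hzbP.1 i]
          · have hlt : gF i zb < αF i := lt_of_le_of_ne (hzbP.1 i) hact
            have htend : Filter.Tendsto (fun t : ℝ => gF i zb + t * gF i (d : X × Y))
                (nhdsWithin (0 : ℝ) (Set.Ioi 0)) (nhds (gF i zb)) := by
              apply Filter.Tendsto.mono_left _ nhdsWithin_le_nhds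
              have : Continuous (fun t : ℝ => gF i zb + t * gF i (d : X × Y)) := by
                exact continuous_const.add (continuous_id.mul continuous_const)
              have h0 : gF i zb + (0 : ℝ) * gF i (d : X × Y) = gF i zb := by ring
              simpa [h0] using this.tendsto 0
            have := htend.eventually_lt_const hlt
            filter_upwards [this] with t ht
            have : gF i (zb + t • (d : X × Y)) = gF i zb + t * gF i (d : X × Y) := by
              simp [map_add, map_smul]
            rw [this]; linarith
        · rw [Filter.eventually_all]
          intro j
          by_cases hact : hT j yb = αT j
          · have hgd : hT j (d : X × Y).2 ≤ 0 := by
              have h := hdj j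
              rw [hhT'def] at h
              simpa [if_pos hact] using h
            filter_upwards [self_mem_nhdsWithin] with t ht
            have ht0 : (0 : ℝ) < t := ht
            have : hT j (yb + t • (d : X × Y).2) = hT j yb + t * hT j (d : X × Y).2 := by
              simp [map_add, map_smul]
            rw [this]
            nlinarith [hybP.1 j]
          · have hlt : hT j yb < αT j := lt_of_le_of_ne (hybP.1 j) hact
            have htend : Filter.Tendsto (fun t : ℝ => hT j yb + t * hT j (d : X × Y).2)
                (nhdsWithin (0 : ℝ) (Set.Ioi 0)) (nhds (hT j yb)) := by
              apply Filter.Tendsto.mono_left _ nhdsWithin_le_nhds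
              have : Continuous (fun t : ℝ => hT j yb + t * hT j (d : X × Y).2) := by
                exact continuous_const.add (continuous_id.mul continuous_const)
              have h0 : hT j yb + (0 : ℝ) * hT j (d : X × Y).2 = hT j yb := by ring
              simpa [h0] using this.tendsto 0
            have := htend.eventually_lt_const hlt
            filter_upwards [this] with t ht
            have : hT j (yb + t • (d : X × Y).2) = hT j yb + t * hT j (d : X × Y).2 := by
              simp [map_add, map_smul]
            rw [this]; linarith
      obtain ⟨t, ⟨h1, h2⟩, ht0⟩ := (hev.and (eventually_mem_nhdsWithin)).exists
      have ht0' : (0 : ℝ) < t := ht0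
      have hzmem : zb + t • (d : X × Y) ∈ gph F := by
        rw [hgF]
        refine ⟨h1, ?_⟩
        obtain ⟨l0, hl0, he0⟩ := hzbP.2
        refine Set.mem_vadd_set.mpr ⟨l0 + t • (d : X × Y),
          Submodule.add_mem _ hl0 (Submodule.smul_mem _ t hdF), ?_⟩
        simp only [vadd_eq_add] at he0 ⊢
        rw [← he0]; abel
      have hθmem : yb + t • (d : X × Y).2 ∈ Θ := by
        rw [hΘ]
        refine ⟨h2, ?_⟩
        obtain ⟨l0, hl0, he0⟩ := hybP.2
        refine Set.mem_vadd_set.mpr ⟨l0 + t • (d : X × Y).2,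
          Submodule.add_mem _ hl0 (Submodule.smul_mem _ t hdT), ?_⟩
        simp only [vadd_eq_add] at he0 ⊢
        rw [← he0]; abel
      have hFmem : yb + t • (d : X × Y).2 ∈ F (xb + t • (d : X × Y).1) := by
        have : zb + t • (d : X × Y) = (xb + t • (d : X × Y).1, yb + t • (d : X × Y).2) := rfl
        rw [this] at hzmem
        exact hzmem
      have hx := hu (xb + t • (d : X × Y).1) ⟨yb + t • (d : X × Y).2, hFmem, hθmem⟩
      have hux : t * u (d : X × Y).1 ≤ 0 := by
        have : xb + t • (d : X × Y).1 - xb = t • (d : X × Y).1 := by abel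
        rw [this, map_smul] at hx
        simpa using hx
      have : u (d : X × Y).1 ≤ 0 := by nlinarith
      simpa using this
    obtain ⟨lam, hlam0, hlam⟩ := farkas (mF + mT) _ _ hfark
    have hsum : ∀ z : X × Y, z ∈ L →
        u z.1 = (∑ i, lam (Fin.castAdd mT i) * gF' i z) +
          ∑ j, lam (Fin.natAdd mF j) * hT' j z.2 := by
      intro z hz
      have h := congrArg (fun (g : ↥L →ₗ[ℝ] ℝ) => g ⟨z, hz⟩) hlam
      simp only [LinearMap.domRestrict_apply, LinearMap.sum_apply, LinearMap.smul_apply,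
        smul_eq_mul, LinearMap.comp_apply, LinearMap.fst_apply, LinearMap.snd_apply,
        ContinuousLinearMap.coe_coe] at h
      rw [Fin.sum_univ_add] at h
      simp only [Fin.addCases_left, Fin.addCases_right, LinearMap.domRestrict_apply,
        LinearMap.comp_apply, LinearMap.snd_apply, ContinuousLinearMap.coe_coe] at h
      exact h
    set A : (X × Y) →L[ℝ] ℝ := ∑ i, lam (Fin.castAdd mT i) • gF' i with hAdef
    set B0 : Y →L[ℝ] ℝ := ∑ j, lam (Fin.natAdd mF j) • hT' j with hB0def
    set W : (X × Y) →L[ℝ] ℝ :=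
      u.comp (ContinuousLinearMap.fst ℝ X Y) - A -
        B0.comp (ContinuousLinearMap.snd ℝ X Y) with hWdef
    have hWapp : ∀ z : X × Y, W z = u z.1 - A z - B0 z.2 := by
      intro z
      simp [hWdef]
    have hAapp : ∀ z : X × Y, A z = ∑ i, lam (Fin.castAdd mT i) * gF' i z := by
      intro z
      rw [hAdef]
      simp [ContinuousLinearMap.sum_apply]
    have hB0app : ∀ y : Y, B0 y = ∑ j, lam (Fin.natAdd mF j) * hT' j y := by
      intro y
      rw [hB0def]
      simp [ContinuousLinearMap.sum_apply]
    have hW : ∀ z : X × Y, z ∈ L → W z = 0 := by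
      intro z hz
      rw [hWapp, hAapp, hB0app, hsum z hz]
      ring
    have hAle : ∀ z ∈ gph F, A (z - zb) ≤ 0 := by
      intro z hz
      have hzP : ∀ i, gF i z ≤ αF i := by rw [hgF] at hz; exact hz.1
      rw [hAapp]
      apply Finset.sum_nonpos
      intro i _
      apply mul_nonpos_of_nonneg_of_nonpos (hlam0 _)
      simp only [hgF'def]
      by_cases hact : gF i zb = αF i
      · rw [if_pos hact, map_sub, hact]
        linarith [hzP i]
      · rw [if_neg hact]
        simp
    have hBle : ∀ θ ∈ Θ, B0 (θ - yb) ≤ 0 := by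
      intro θ hθ
      have hθP : ∀ j, hT j θ ≤ αT j := by rw [hΘ] at hθ; exact hθ.1
      rw [hB0app]
      apply Finset.sum_nonpos
      intro j _
      apply mul_nonpos_of_nonneg_of_nonpos (hlam0 _)
      simp only [hhT'def]
      by_cases hact : hT j yb = αT j
      · rw [if_pos hact, map_sub, hact]
        linarith [hθP j]
      · rw [if_neg hact]
        simp
    have hmemLF : ∀ z ∈ gph F, z - zb ∈ LF := by
      intro z hz
      rw [hgF] at hz
      obtain ⟨l1, hl1, he1⟩ := hz.2
      obtain ⟨l0, hl0, he0⟩ := hzbP.2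
      simp only [vadd_eq_add] at he1 he0
      have : z - zb = l1 - l0 := by rw [← he1, ← he0]; abel
      rw [this]
      exact Submodule.sub_mem _ hl1 hl0
    have hmemLT : ∀ θ ∈ Θ, θ - yb ∈ LT := by
      intro θ hθ
      rw [hΘ] at hθ
      obtain ⟨l1, hl1, he1⟩ := hθ.2
      obtain ⟨l0, hl0, he0⟩ := hybP.2
      simp only [vadd_eq_add] at he1 he0
      have : θ - yb = l1 - l0 := by rw [← he1, ← he0]; abel
      rw [this]
      exact Submodule.sub_mem _ hl1 hl0
    rcases hcase with hLFtop | hLTtop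
    · refine ⟨B0 + W.comp (ContinuousLinearMap.inr ℝ X Y), ?_, ?_⟩
      · intro θ hθ
        have hmem : ((0 : X), θ - yb) ∈ L := by
          rw [hLdef]
          refine Submodule.mem_inf.mpr ⟨by rw [hLFtop]; trivial, ?_⟩
          exact Submodule.mem_prod.mpr ⟨trivial, hmemLT θ hθ⟩
        have hw0 := hW _ hmem
        simp only [ContinuousLinearMap.add_apply, ContinuousLinearMap.comp_apply,
          ContinuousLinearMap.inr_apply]
        rw [hw0, add_zero]
        exact hBle θ hθ
      · intro x y hy
        have hz : (x, y) ∈ gph F := hy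
        have hsub : ((x, y) : X × Y) - zb = (x - xb, y - yb) := rfl
        have hkey : u (x - xb) = A ((x, y) - zb) + B0 (y - yb) + W ((x, y) - zb) := by
          rw [hWapp]
          rw [hsub]
          ring_nf
        have hWsplit : W ((x, y) - zb) = W (x - xb, 0) + W (0, y - yb) := by
          rw [← map_add]
          congr 1
          rw [hsub]
          ext <;> simp
        have hWx : W ((x - xb : X), (0 : Y)) = 0 := by
          apply hW
          rw [hLdef]
          refine Submodule.mem_inf.mpr ⟨by rw [hLFtop]; trivial, ?_⟩
          exact Submodule.mem_prod.mpr ⟨trivial, Submodule.zero_mem _⟩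
        simp only [ContinuousLinearMap.add_apply, ContinuousLinearMap.comp_apply,
          ContinuousLinearMap.inr_apply]
        have hAz := hAle _ hz
        rw [hkey, hWsplit, hWx]
        linarith
    · refine ⟨B0, ?_, ?_⟩
      · intro θ hθ
        exact hBle θ hθ
      · intro x y hy
        have hz : (x, y) ∈ gph F := hy
        have hsub : ((x, y) : X × Y) - zb = (x - xb, y - yb) := rfl
        have hkey : u (x - xb) = A ((x, y) - zb) + B0 (y - yb) + W ((x, y) - zb) := by
          rw [hWapp]
          rw [hsub]
          ring_nf
        have hWz : W ((x, y) - zb) = 0 := by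
          apply hW
          rw [hLdef]
          refine Submodule.mem_inf.mpr ⟨hmemLF _ hz, ?_⟩
          rw [hsub]
          exact Submodule.mem_prod.mpr ⟨trivial, by rw [hLTtop]; trivial⟩
        have hAz := hAle _ hz
        rw [hkey, hWz]
        linarith

  · rintro ⟨v, hv, huv⟩ x ⟨y, hyFx, hyθ⟩
    have h1 := huv x y hyFx
    have h2 := hv y hyθ
    linarith
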